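/- Let k ≥ 1, J = [[0, I_k], [−I_k, 0]] ∈ M_{2k}(ℝ), and G_ℂ = { A ∈ GL_{2k}(ℝ) : A·J = J·A }, with normalizer N(G_ℂ) in GL_{2k}(ℝ). The map p : N(G_ℂ) → {1, −1} (the two-element multiplicative group) defined by B⁻¹·J·B = p(B)·J is a well-defined surjective group homomorphism whose kernel is exactly G_ℂ; hence it induces a group isomorphism N(G_ℂ)/G_ℂ ≅ ℤ/2ℤ. -/

import Mathlib

open Matrix

/-- The standard complex structure matrix `J = [[0, I], [-I, 0]]`. -/
def symplJ (k : ℕ) : Matrix (Fin k ⊕ Fin k) (Fin k ⊕ Fin k) ℝ :=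
  Matrix.fromBlocks 0 1 (-1) 0

/-- The image `G_ℂ = { A ∈ GL_{2k}(ℝ) : A·J = J·A }` of `GL_k(ℂ)` under its
standard real embedding, as a subgroup of `GL_{2k}(ℝ)`. -/
def GLC (k : ℕ) : Subgroup (GL (Fin k ⊕ Fin k) ℝ) where
  carrier := {A | (A : Matrix (Fin k ⊕ Fin k) (Fin k ⊕ Fin k) ℝ) * symplJ k =
    symplJ k * (A : Matrix (Fin k ⊕ Fin k) (Fin k ⊕ Fin k) ℝ)}
  one_mem' := by simp
  mul_mem' := by
    intro a b ha hb
    simp only [Set.mem_setOf_eq] at *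
    set M := (a : Matrix (Fin k ⊕ Fin k) (Fin k ⊕ Fin k) ℝ)
    set N := (b : Matrix (Fin k ⊕ Fin k) (Fin k ⊕ Fin k) ℝ)
    have : ((a * b : GL (Fin k ⊕ Fin k) ℝ) : Matrix (Fin k ⊕ Fin k) (Fin k ⊕ Fin k) ℝ)
        = M * N := rfl
    rw [this, mul_assoc, hb, ← mul_assoc, ha, mul_assoc]
  inv_mem' := by
    intro a ha
    simp only [Set.mem_setOf_eq] at *
    set M := (a : Matrix (Fin k ⊕ Fin k) (Fin k ⊕ Fin k) ℝ)
    set N := ((a⁻¹ : GL (Fin k ⊕ Fin k) ℝ) : Matrix (Fin k ⊕ Fin k) (Fin k ⊕ Fin k) ℝ)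
    have hMN : M * N = 1 := a.mul_inv
    have hNM : N * M = 1 := a.inv_mul
    calc N * symplJ k = N * symplJ k * (M * N) := by rw [hMN, mul_one]
      _ = N * (symplJ k * M) * N := by noncomm_ring
      _ = N * (M * symplJ k) * N := by rw [ha]
      _ = (N * M) * (symplJ k * N) := by noncomm_ring
      _ = symplJ k * N := by rw [hNM, one_mul]

namespace GLCaux

variable {k : ℕ}

abbrev Mat (k : ℕ) := Matrix (Fin k ⊕ Fin k) (Fin k ⊕ Fin k) ℝ

lemma J_mul_J (k : ℕ) : symplJ k * symplJ k = -1 := by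
  rw [symplJ, fromBlocks_multiply]
  simp [← fromBlocks_one, fromBlocks_neg]

lemma neg_J (k : ℕ) : -symplJ k = Matrix.fromBlocks 0 (-1) 1 0 := by
  rw [symplJ, fromBlocks_neg]; simp

lemma scalar_of_commute_units (M : Matrix (Fin k) (Fin k) ℝ)
    (h : ∀ C : (Matrix (Fin k) (Fin k) ℝ)ˣ, (C : Matrix (Fin k) (Fin k) ℝ) * M = M * C) :
    ∃ c : ℝ, M = c • (1 : Matrix (Fin k) (Fin k) ℝ) := by
  have h2 : M ∈ Set.range (Matrix.scalar (Fin k)) := by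
    rw [Matrix.mem_range_scalar_iff_commute_single]
    intro i j hij
    set E := Matrix.single i j (1 : ℝ) with hE
    have hE2 : E * E = 0 := by
      rw [hE]; exact Matrix.single_mul_single_of_ne (h := hij.symm) ..
    have hmul : (1 + E) * (1 - E) = 1 := by
      have : (1 + E) * (1 - E) = 1 - E * E := by noncomm_ring
      rw [this, hE2, sub_zero]
    have hmul' : (1 - E) * (1 + E) = 1 := by
      have : (1 - E) * (1 + E) = 1 - E * E := by noncomm_ring
      rw [this, hE2, sub_zero]
    have := h ⟨1 + E, 1 - E, hmul, hmul'⟩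
    simp only [Units.val_mk] at this
    have hEM : E * M = M * E := by
      have h' : 1 * M + E * M = M * 1 + M * E := by
        rw [← add_mul, ← mul_add]; exact this
      simpa using h'
    exact hEM
  obtain ⟨c, hc⟩ := h2
  refine ⟨c, ?_⟩
  rw [← hc]
  ext i j
  simp [Matrix.scalar_apply, Matrix.smul_apply, Matrix.one_apply, Matrix.diagonal_apply]


lemma mem_GLC_iff {A : GL (Fin k ⊕ Fin k) ℝ} :
    A ∈ GLC k ↔ (A : Mat k) * symplJ k = symplJ k * (A : Mat k) := Iff.rfl

def Junit (k : ℕ) : GL (Fin k ⊕ Fin k) ℝ :=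
  ⟨symplJ k, -symplJ k, by rw [mul_neg, J_mul_J, neg_neg], by rw [neg_mul, J_mul_J, neg_neg]⟩

lemma Junit_mem (k : ℕ) : Junit k ∈ GLC k := by
  show symplJ k * symplJ k = symplJ k * symplJ k
  rfl

def emb (C : (Matrix (Fin k) (Fin k) ℝ)ˣ) : GL (Fin k ⊕ Fin k) ℝ :=
  ⟨Matrix.fromBlocks (C : Matrix (Fin k) (Fin k) ℝ) 0 0 C,
   Matrix.fromBlocks ((C⁻¹ : _ˣ) : Matrix (Fin k) (Fin k) ℝ) 0 0 ((C⁻¹ : _ˣ) : Matrix (Fin k) (Fin k) ℝ),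
   by rw [fromBlocks_multiply]
      simp only [Matrix.mul_zero, Matrix.zero_mul, add_zero, zero_add, Units.mul_inv]
      exact fromBlocks_one,
   by rw [fromBlocks_multiply]
      simp only [Matrix.mul_zero, Matrix.zero_mul, add_zero, zero_add, Units.inv_mul]
      exact fromBlocks_one⟩

lemma emb_mem (C : (Matrix (Fin k) (Fin k) ℝ)ˣ) : emb C ∈ GLC k := by
  show Matrix.fromBlocks (C : Matrix (Fin k) (Fin k) ℝ) 0 0 C * symplJ k
      = symplJ k * Matrix.fromBlocks (C : Matrix (Fin k) (Fin k) ℝ) 0 0 C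
  rw [symplJ, fromBlocks_multiply, fromBlocks_multiply]
  simp

/-- `matK B = B⁻¹ J B`. -/
def matK (B : GL (Fin k ⊕ Fin k) ℝ) : Mat k :=
  ((B⁻¹ : GL (Fin k ⊕ Fin k) ℝ) : Mat k) * symplJ k * (B : Mat k)

lemma matK_comm {B : GL (Fin k ⊕ Fin k) ℝ} (hB : B ∈ (Subgroup.normalizer (GLC k : Set (GL (Fin k ⊕ Fin k) ℝ))))
    {A : GL (Fin k ⊕ Fin k) ℝ} (hA : A ∈ GLC k) :
    (A : Mat k) * matK B = matK B * (A : Mat k) := by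
  have hBA : B * A * B⁻¹ ∈ GLC k := (Subgroup.mem_normalizer_iff.mp hB A).mp hA
  rw [mem_GLC_iff] at hBA
  have hcoe : ((B * A * B⁻¹ : GL (Fin k ⊕ Fin k) ℝ) : Mat k)
      = (B : Mat k) * (A : Mat k) * ((B⁻¹ : GL (Fin k ⊕ Fin k) ℝ) : Mat k) := by
    rw [Units.val_mul, Units.val_mul]
  rw [hcoe] at hBA
  set a := (A : Mat k)
  set b := (B : Mat k)
  set c := ((B⁻¹ : GL (Fin k ⊕ Fin k) ℝ) : Mat k)
  have hbc : b * c = 1 := B.mul_inv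
  have hcb : c * b = 1 := B.inv_mul
  set J := symplJ k
  show a * (c * J * b) = c * J * b * a
  calc a * (c * J * b) = (c * b) * (a * (c * J * b)) := by rw [hcb, one_mul]
    _ = c * ((b * a * c) * J) * b := by noncomm_ring
    _ = c * (J * (b * a * c)) * b := by rw [hBA]
    _ = (c * J * b) * (a * (c * b)) := by noncomm_ring
    _ = c * J * b * a := by rw [hcb, mul_one]

lemma matK_sq {B : GL (Fin k ⊕ Fin k) ℝ} : matK B * matK B = -1 := by
  set b := (B : Mat k)
  set c := ((B⁻¹ : GL (Fin k ⊕ Fin k) ℝ) : Mat k)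
  have hbc : b * c = 1 := B.mul_inv
  have hcb : c * b = 1 := B.inv_mul
  show c * symplJ k * b * (c * symplJ k * b) = -1
  calc c * symplJ k * b * (c * symplJ k * b)
      = c * symplJ k * (b * c) * symplJ k * b := by noncomm_ring
    _ = c * (symplJ k * symplJ k) * b := by rw [hbc]; noncomm_ring
    _ = c * (-1) * b := by rw [J_mul_J]
    _ = -(c * b) := by noncomm_ring
    _ = -1 := by rw [hcb]

lemma matK_eq (hk : 1 ≤ k) {B : GL (Fin k ⊕ Fin k) ℝ} (hB : B ∈ (Subgroup.normalizer (GLC k : Set (GL (Fin k ⊕ Fin k) ℝ)))) :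
    matK B = symplJ k ∨ matK B = -symplJ k := by
  set K := matK B with hKdef
  -- blocks of K
  set X := K.toBlocks₁₁ with hX
  set Y := K.toBlocks₁₂ with hY
  set Z := K.toBlocks₂₁ with hZ
  set W := K.toBlocks₂₂ with hW
  have hK : K = Matrix.fromBlocks X Y Z W := (fromBlocks_toBlocks K).symm
  -- each block commutes with all units
  have hblocks : ∀ C : (Matrix (Fin k) (Fin k) ℝ)ˣ,
      (C : Matrix (Fin k) (Fin k) ℝ) * X = X * C ∧ (C : Matrix (Fin k) (Fin k) ℝ) * Y = Y * C ∧
      (C : Matrix (Fin k) (Fin k) ℝ) * Z = Z * C ∧ (C : Matrix (Fin k) (Fin k) ℝ) * W = W * C := by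
    intro C
    have h := matK_comm hB (emb_mem C)
    rw [← hKdef, hK] at h
    have hc : ((emb C : GL (Fin k ⊕ Fin k) ℝ) : Mat k)
        = Matrix.fromBlocks (C : Matrix (Fin k) (Fin k) ℝ) 0 0 C := rfl
    rw [hc, fromBlocks_multiply, fromBlocks_multiply] at h
    simp only [Matrix.zero_mul, Matrix.mul_zero, add_zero, zero_add] at h
    rw [fromBlocks_inj] at h
    exact ⟨h.1, h.2.1, h.2.2.1, h.2.2.2⟩
  obtain ⟨x, hx⟩ := scalar_of_commute_units X fun C => (hblocks C).1
  obtain ⟨y, hy⟩ := scalar_of_commute_units Y fun C => (hblocks C).2.1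
  -- K commutes with J
  have hKJ : K * symplJ k = symplJ k * K := (matK_comm hB (Junit_mem k)).symm
  have hJc : ((Junit k : GL (Fin k ⊕ Fin k) ℝ) : Mat k) = symplJ k := rfl
  have hZW : Z = -Y ∧ W = X := by
    have h := hKJ
    rw [hK, symplJ, fromBlocks_multiply, fromBlocks_multiply] at h
    simp only [Matrix.mul_zero, Matrix.zero_mul, Matrix.mul_one, Matrix.one_mul,
      Matrix.mul_neg, Matrix.neg_mul, add_zero, zero_add, Matrix.mul_one] at h
    rw [fromBlocks_inj] at h
    obtain ⟨h11, h12, h21, h22⟩ := h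
    exact ⟨h11.symm, h12.symm⟩
  obtain ⟨hZe, hWe⟩ := hZW
  -- use K² = -1
  have hsq : K * K = -1 := matK_sq
  rw [hK, hZe, hWe, hx, hy, fromBlocks_multiply] at hsq
  have hm1 : (-1 : Mat k) = Matrix.fromBlocks (-1) 0 0 (-1) := by
    rw [← fromBlocks_one, fromBlocks_neg]; simp
  rw [hm1, fromBlocks_inj] at hsq
  obtain ⟨h11, h12, _, _⟩ := hsq
  have i0 : Fin k := ⟨0, hk⟩
  have h11' : (x * x) • (1 : Matrix (Fin k) (Fin k) ℝ) + -((y * y) • 1) = -1 := by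
    have h := h11
    simp only [Matrix.smul_mul, Matrix.mul_smul, Matrix.mul_neg, Matrix.neg_mul,
      Matrix.one_mul, Matrix.mul_one, smul_neg, smul_smul, neg_smul] at h
    convert h using 2 <;> ring_nf <;> try rfl
  have h12' : (x * y) • (1 : Matrix (Fin k) (Fin k) ℝ) + (y * x) • 1 = 0 := by
    have h := h12
    simp only [Matrix.smul_mul, Matrix.mul_smul, Matrix.mul_neg, Matrix.neg_mul,
      Matrix.one_mul, Matrix.mul_one, smul_neg, smul_smul, neg_smul] at h
    convert h using 2 <;> ring_nf <;> try rfl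
  have e11 : x * x - y * y = -1 := by
    have h := congrFun (congrFun h11' i0) i0
    simpa [Matrix.add_apply, Matrix.neg_apply, Matrix.smul_apply, Matrix.one_apply_eq,
      sub_eq_add_neg] using h
  have e12 : x * y + y * x = 0 := by
    have h := congrFun (congrFun h12' i0) i0
    simpa [Matrix.add_apply, Matrix.smul_apply, Matrix.one_apply_eq] using h
  have hxy : x * y = 0 := by have := mul_comm x y; linarith
  have hx0 : x = 0 := by
    rcases mul_eq_zero.mp hxy with h | h
    · exact h
    · exfalso; rw [h] at e11; nlinarith [sq_nonneg x]
  have hy1 : y = 1 ∨ y = -1 := by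
    apply mul_self_eq_one_iff.mp
    rw [hx0] at e11; linarith
  rcases hy1 with h | h
  · left
    rw [hK, hZe, hWe, hx, hy, hx0, h, symplJ]
    simp
  · right
    rw [hK, hZe, hWe, hx, hy, hx0, h, neg_J]
    simp


lemma J_ne_negJ (hk : 1 ≤ k) : symplJ k ≠ -symplJ k := by
  intro h
  have h' := congrFun (congrFun h (Sum.inl ⟨0, hk⟩)) (Sum.inr ⟨0, hk⟩)
  simp [symplJ, Matrix.fromBlocks_apply₁₂, Matrix.neg_apply, Matrix.one_apply_eq] at h'
  exact absurd h' (by norm_num)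

lemma smul_J_inj (hk : 1 ≤ k) {c c' : ℝ} (h : c • symplJ k = c' • symplJ k) : c = c' := by
  have h' := congrFun (congrFun h (Sum.inl ⟨0, hk⟩)) (Sum.inr ⟨0, hk⟩)
  simpa [symplJ, Matrix.smul_apply, Matrix.fromBlocks_apply₁₂, Matrix.one_apply_eq] using h'

open Classical in
noncomputable def pfun (B : (Subgroup.normalizer (GLC k : Set (GL (Fin k ⊕ Fin k) ℝ)))) : ℝˣ :=
  if matK (B : GL (Fin k ⊕ Fin k) ℝ) = symplJ k then 1 else -1

lemma pfun_spec (hk : 1 ≤ k) (B : (Subgroup.normalizer (GLC k : Set (GL (Fin k ⊕ Fin k) ℝ)))) :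
    matK (B : GL (Fin k ⊕ Fin k) ℝ) = ((pfun B : ℝ)) • symplJ k := by
  rw [pfun]
  split_ifs with h
  · simpa using h
  · rcases matK_eq hk B.2 with h' | h'
    · exact absurd h' h
    · simpa using h'

lemma pfun_vals (B : (Subgroup.normalizer (GLC k : Set (GL (Fin k ⊕ Fin k) ℝ)))) : pfun B = 1 ∨ pfun B = -1 := by
  rw [pfun]; split_ifs <;> simp

lemma matK_mul (b c : GL (Fin k ⊕ Fin k) ℝ) :
    matK (b * c) = ((c⁻¹ : GL (Fin k ⊕ Fin k) ℝ) : Mat k) * matK b * (c : Mat k) := by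
  rw [matK, matK, _root_.mul_inv_rev, Units.val_mul, Units.val_mul]
  noncomm_ring

lemma pfun_mul (hk : 1 ≤ k) (B C : (Subgroup.normalizer (GLC k : Set (GL (Fin k ⊕ Fin k) ℝ)))) :
    pfun (B * C) = pfun B * pfun C := by
  apply Units.ext
  apply smul_J_inj hk
  rw [← pfun_spec hk (B * C)]
  have hco : ((B * C : (Subgroup.normalizer (GLC k : Set (GL (Fin k ⊕ Fin k) ℝ)))) : GL (Fin k ⊕ Fin k) ℝ)
      = (B : GL (Fin k ⊕ Fin k) ℝ) * (C : GL (Fin k ⊕ Fin k) ℝ) := rfl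
  rw [hco, matK_mul, pfun_spec hk B, Matrix.mul_smul, Matrix.smul_mul,
    ← matK, pfun_spec hk C, smul_smul, Units.val_mul]

lemma pfun_one_iff (hk : 1 ≤ k) (B : (Subgroup.normalizer (GLC k : Set (GL (Fin k ⊕ Fin k) ℝ)))) :
    pfun B = 1 ↔ (B : GL (Fin k ⊕ Fin k) ℝ) ∈ GLC k := by
  set b := ((B : GL (Fin k ⊕ Fin k) ℝ) : Mat k)
  set c := (((B : GL (Fin k ⊕ Fin k) ℝ)⁻¹ : GL (Fin k ⊕ Fin k) ℝ) : Mat k)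
  have hbc : b * c = 1 := (B : GL (Fin k ⊕ Fin k) ℝ).mul_inv
  have hcb : c * b = 1 := (B : GL (Fin k ⊕ Fin k) ℝ).inv_mul
  constructor
  · intro h
    have hs := pfun_spec hk B
    rw [h] at hs
    simp only [Units.val_one, one_smul] at hs
    rw [mem_GLC_iff]
    have hs' : c * symplJ k * b = symplJ k := hs
    calc b * symplJ k = b * (c * symplJ k * b) := by rw [hs']
      _ = (b * c) * (symplJ k * b) := by noncomm_ring
      _ = symplJ k * b := by rw [hbc, one_mul]
  · intro h
    rw [mem_GLC_iff] at h
    have hK : matK (B : GL (Fin k ⊕ Fin k) ℝ) = symplJ k := by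
      show c * symplJ k * b = symplJ k
      calc c * symplJ k * b = c * (symplJ k * b) := by rw [mul_assoc]
        _ = c * (b * symplJ k) := by rw [← h]
        _ = (c * b) * symplJ k := by rw [mul_assoc]
        _ = symplJ k := by rw [hcb, one_mul]
    rw [pfun, if_pos hK]

def Cmat (k : ℕ) : Mat k := Matrix.fromBlocks 1 0 0 (-1)

lemma Cmat_sq (k : ℕ) : Cmat k * Cmat k = 1 := by
  rw [Cmat, fromBlocks_multiply]
  simp [← fromBlocks_one]

lemma Cmat_J (k : ℕ) : Cmat k * symplJ k = -(symplJ k * Cmat k) := by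
  rw [Cmat, symplJ, fromBlocks_multiply, fromBlocks_multiply, fromBlocks_neg]
  simp

def conjU (k : ℕ) : GL (Fin k ⊕ Fin k) ℝ := ⟨Cmat k, Cmat k, Cmat_sq k, Cmat_sq k⟩

lemma conj_comm_of_comm (m : Mat k) (hm : m * symplJ k = symplJ k * m) :
    (Cmat k * m * Cmat k) * symplJ k = symplJ k * (Cmat k * m * Cmat k) := by
  calc (Cmat k * m * Cmat k) * symplJ k
      = Cmat k * m * (Cmat k * symplJ k) := by noncomm_ring
    _ = Cmat k * m * (-(symplJ k * Cmat k)) := by rw [Cmat_J]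
    _ = -(Cmat k * (m * symplJ k) * Cmat k) := by noncomm_ring
    _ = -(Cmat k * (symplJ k * m) * Cmat k) := by rw [hm]
    _ = -((Cmat k * symplJ k) * (m * Cmat k)) := by noncomm_ring
    _ = -((-(symplJ k * Cmat k)) * (m * Cmat k)) := by rw [Cmat_J]
    _ = symplJ k * (Cmat k * m * Cmat k) := by noncomm_ring

lemma conjU_mem : conjU k ∈ (Subgroup.normalizer (GLC k : Set (GL (Fin k ⊕ Fin k) ℝ))) := by
  rw [Subgroup.mem_normalizer_iff]
  intro g
  have hco : ((conjU k * g * (conjU k)⁻¹ : GL (Fin k ⊕ Fin k) ℝ) : Mat k)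
      = Cmat k * (g : Mat k) * Cmat k := by
    rw [Units.val_mul, Units.val_mul]; rfl
  constructor
  · intro hg
    rw [mem_GLC_iff] at hg ⊢
    rw [hco]
    exact conj_comm_of_comm _ hg
  · intro hg
    rw [mem_GLC_iff] at hg ⊢
    rw [hco] at hg
    have h2 := conj_comm_of_comm _ hg
    have h3 : Cmat k * (Cmat k * (g : Mat k) * Cmat k) * Cmat k = (g : Mat k) := by
      calc Cmat k * (Cmat k * (g : Mat k) * Cmat k) * Cmat k
          = (Cmat k * Cmat k) * (g : Mat k) * (Cmat k * Cmat k) := by noncomm_ring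
        _ = (g : Mat k) := by rw [Cmat_sq, one_mul, mul_one]
    rwa [h3] at h2

lemma matK_conjU (k : ℕ) : matK (conjU k) = -symplJ k := by
  show Cmat k * symplJ k * Cmat k = -symplJ k
  calc Cmat k * symplJ k * Cmat k = (-(symplJ k * Cmat k)) * Cmat k := by rw [Cmat_J]
    _ = -(symplJ k * (Cmat k * Cmat k)) := by noncomm_ring
    _ = -symplJ k := by rw [Cmat_sq, mul_one]

lemma pfun_conjU (hk : 1 ≤ k) : pfun (⟨conjU k, conjU_mem⟩ : (Subgroup.normalizer (GLC k : Set (GL (Fin k ⊕ Fin k) ℝ)))) = -1 := by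
  rw [pfun, if_neg]
  rw [show ((⟨conjU k, conjU_mem⟩ : (Subgroup.normalizer (GLC k : Set (GL (Fin k ⊕ Fin k) ℝ)))) : GL (Fin k ⊕ Fin k) ℝ) = conjU k from rfl,
    matK_conjU]
  intro h
  exact J_ne_negJ hk h.symm

lemma pfun_one : pfun (1 : (Subgroup.normalizer (GLC k : Set (GL (Fin k ⊕ Fin k) ℝ)))) = 1 := by
  rw [pfun, if_pos]
  show matK ((1 : (Subgroup.normalizer (GLC k : Set (GL (Fin k ⊕ Fin k) ℝ)))) : GL (Fin k ⊕ Fin k) ℝ) = symplJ k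
  rw [OneMemClass.coe_one, matK]
  simp

lemma neg_one_ne_one : (-1 : ℝˣ) ≠ 1 := by
  intro h
  have h2 : ((-1 : ℝˣ) : ℝ) = ((1 : ℝˣ) : ℝ) := congrArg Units.val h
  rw [Units.val_neg, Units.val_one] at h2
  linarith

open Classical in
noncomputable def qfun (hk : 1 ≤ k) :
    (Subgroup.normalizer (GLC k : Set (GL (Fin k ⊕ Fin k) ℝ))) →* Multiplicative (ZMod 2) where
  toFun B := if pfun B = 1 then 1 else Multiplicative.ofAdd 1
  map_one' := by
    show (if pfun (1 : (Subgroup.normalizer (GLC k : Set (GL (Fin k ⊕ Fin k) ℝ)))) = 1 then 1 else Multiplicative.ofAdd 1) = 1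
    rw [if_pos pfun_one]
  map_mul' B C := by
    show (if pfun (B * C) = 1 then 1 else Multiplicative.ofAdd 1)
        = (if pfun B = 1 then 1 else Multiplicative.ofAdd 1) *
          (if pfun C = 1 then 1 else Multiplicative.ofAdd 1)
    rw [pfun_mul hk]
    rcases pfun_vals B with hB | hB <;> rcases pfun_vals C with hC | hC <;>
        rw [hB, hC] <;>
      simp [neg_one_ne_one, neg_mul_neg] <;> decide

lemma qfun_apply (hk : 1 ≤ k) (B : (Subgroup.normalizer (GLC k : Set (GL (Fin k ⊕ Fin k) ℝ)))) :
    qfun hk B = if pfun B = 1 then 1 else Multiplicative.ofAdd 1 := rfl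

lemma qfun_eq_one_iff (hk : 1 ≤ k) (B : (Subgroup.normalizer (GLC k : Set (GL (Fin k ⊕ Fin k) ℝ)))) :
    qfun hk B = 1 ↔ pfun B = 1 := by
  rw [qfun_apply]
  split_ifs with h
  · simp [h]
  · simp only [h, iff_false]
    decide

lemma qfun_surj (hk : 1 ≤ k) : Function.Surjective (qfun hk) := by
  intro x
  rcases (by decide : ∀ z : Multiplicative (ZMod 2), z = 1 ∨ z = Multiplicative.ofAdd 1) x
    with h | h
  · exact ⟨1, by rw [h, _root_.map_one]⟩
  · refine ⟨⟨conjU k, conjU_mem⟩, ?_⟩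
    rw [h, qfun_apply, if_neg]
    rw [pfun_conjU hk]
    exact neg_one_ne_one

lemma ker_qfun (hk : 1 ≤ k) :
    (GLC k).subgroupOf (Subgroup.normalizer (GLC k : Set (GL (Fin k ⊕ Fin k) ℝ))) = (qfun hk).ker := by
  ext B
  rw [Subgroup.mem_subgroupOf, MonoidHom.mem_ker, qfun_eq_one_iff hk, pfun_one_iff hk]

end GLCaux




/-- Exactness part of the paper's Lemma 6.1 (lem:N(GL(C))): the map
`p : N(G_ℂ) → {1, -1}` defined by `B⁻¹·J·B = p(B)·J` is a well-defined
surjective group homomorphism with kernel exactly `G_ℂ`, and it induces a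
group isomorphism `N(G_ℂ)/G_ℂ ≅ ℤ/2ℤ`. -/
theorem GLC_normalizer_exact_sequence (k : ℕ) (hk : 1 ≤ k) :
    ∃ p : (Subgroup.normalizer (GLC k : Set (GL (Fin k ⊕ Fin k) ℝ))) →* ℝˣ,
      (∀ B : (Subgroup.normalizer (GLC k : Set (GL (Fin k ⊕ Fin k) ℝ))),
        (((B : GL (Fin k ⊕ Fin k) ℝ)⁻¹ : GL (Fin k ⊕ Fin k) ℝ) :
            Matrix (Fin k ⊕ Fin k) (Fin k ⊕ Fin k) ℝ) * symplJ k *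
          ((B : GL (Fin k ⊕ Fin k) ℝ) : Matrix (Fin k ⊕ Fin k) (Fin k ⊕ Fin k) ℝ)
            = (p B : ℝ) • symplJ k) ∧
      (∀ B : (Subgroup.normalizer (GLC k : Set (GL (Fin k ⊕ Fin k) ℝ))), p B = 1 ∨ p B = -1) ∧
      (∃ B : (Subgroup.normalizer (GLC k : Set (GL (Fin k ⊕ Fin k) ℝ))), p B = -1) ∧
      (∀ B : (Subgroup.normalizer (GLC k : Set (GL (Fin k ⊕ Fin k) ℝ))), p B = 1 ↔ (B : GL (Fin k ⊕ Fin k) ℝ) ∈ GLC k) ∧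
      ∃ e : ((Subgroup.normalizer (GLC k : Set (GL (Fin k ⊕ Fin k) ℝ))) ⧸ (GLC k).subgroupOf (Subgroup.normalizer (GLC k : Set (GL (Fin k ⊕ Fin k) ℝ)))) ≃*
          Multiplicative (ZMod 2),
        ∀ B : (Subgroup.normalizer (GLC k : Set (GL (Fin k ⊕ Fin k) ℝ))), e (QuotientGroup.mk B) = 1 ↔ p B = 1 := by
  classical
  let p : (Subgroup.normalizer (GLC k : Set (GL (Fin k ⊕ Fin k) ℝ))) →* ℝˣ :=
    { toFun := GLCaux.pfun
      map_one' := GLCaux.pfun_one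
      map_mul' := GLCaux.pfun_mul hk }
  refine ⟨p, fun B => GLCaux.pfun_spec hk B, fun B => GLCaux.pfun_vals B,
    ⟨⟨GLCaux.conjU k, GLCaux.conjU_mem⟩, GLCaux.pfun_conjU hk⟩,
    fun B => GLCaux.pfun_one_iff hk B, ?_⟩
  haveI hnormal : ((GLC k).subgroupOf (Subgroup.normalizer (GLC k : Set (GL (Fin k ⊕ Fin k) ℝ)))).Normal := by
    rw [GLCaux.ker_qfun hk]
    exact (GLCaux.qfun hk).normal_ker
  refine ⟨(QuotientGroup.quotientMulEquivOfEq (GLCaux.ker_qfun hk)).trans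
    (QuotientGroup.quotientKerEquivOfSurjective _ (GLCaux.qfun_surj hk)), ?_⟩
  intro B
  rw [MulEquiv.trans_apply, QuotientGroup.quotientMulEquivOfEq_mk]
  have h1 : (QuotientGroup.quotientKerEquivOfSurjective (GLCaux.qfun hk) (GLCaux.qfun_surj hk))
      (QuotientGroup.mk B) = GLCaux.qfun hk B := rfl
  rw [h1, GLCaux.qfun_eq_one_iff hk]
  exact Iff.rfl
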